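/- arXiv:math/0603375 — 2 statements merged into one kernel-verified Lean document; each statement's English description precedes it below -/
import Mathlib

section
/- For all k ≥ 1, the evaluation at z = 1 of the degree-k homogeneous component of the two-sided ideal of T[z] generated by h(P) equals P_k; that is, φ_1(⟨h(P)⟩_k) = P_k. -/
open Polynomial

noncomputable section

namespace PBWPaper

variable (K : Type*) [Field K] (s : ℕ)

/-- The free associative algebra `T = K⟨x_1,…,x_s⟩`. -/
abbrev T := FreeAlgebra K (Fin s)

/-- `V`: the span of the generators (the degree-one part of `T`). -/
def V : Submodule K (T K s) :=
  Submodule.span K (Set.range (FreeAlgebra.ι K : Fin s → T K s))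

/-- `T_i`: the span of the words of length `i`. -/
def Tgrade (i : ℕ) : Submodule K (T K s) := V K s ^ i

/-- `F^kT = ⊕_{i ≤ k} T_i`, the standard filtration of `T`. -/
def Ffilt (k : ℕ) : Submodule K (T K s) := ⨆ i ≤ k, Tgrade K s i

/-- An element of `T[z]` (with `deg z = 1`, total grading) is homogeneous of degree `n`
iff its `z^j`-coefficient lies in `T_{n-j}` for `j ≤ n` and vanishes for `j > n`. -/
def homogZ (n : ℕ) (w : Polynomial (T K s)) : Prop :=
  (∀ j ≤ n, w.coeff j ∈ Tgrade K s (n - j)) ∧ ∀ j, n < j → w.coeff j = 0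

/-- The nested subspaces `P_k` of `T`:  `P_1 = span(P ∩ F^1 T)` and
`P_k = V·P_{k-1} + P_{k-1}·V + span(P ∩ F^k T)` for `k > 1`. -/
def Pk (Pset : Set (T K s)) : ℕ → Submodule K (T K s)
  | 0 => ⊥
  | k + 1 => V K s * Pk Pset k + Pk Pset k * V K s +
      Submodule.span K (Pset ∩ (Ffilt K s (k + 1) : Set (T K s)))


variable {m : ℕ}

/-- The set of relations `P = {r_1+l_1, …, r_m+l_m}` of the deformation `U = T/⟨P⟩`. -/
def PsetOf (r l : Fin m → T K s) : Set (T K s) := Set.range fun i => r i + l i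

/-- The homogenization `h(r_i+l_i) = r_i + Σ_{j<d_i} z^{d_i-j} l_{i,j} ∈ T[z]`,
where `l_i = Σ_{j<d_i} l_{i,j}` is the decomposition of `l_i` into homogeneous components. -/
def hRel (d : Fin m → ℕ) (r : Fin m → T K s) (lc : Fin m → ℕ → T K s) (i : Fin m) :
    Polynomial (T K s) :=
  Polynomial.C (r i) + ∑ j ∈ Finset.range (d i), Polynomial.monomial (d i - j) (lc i j)

/-- The set of relations `h(P)` of the central extension `D = T[z]/⟨h(P)⟩`. -/
def hPset (d : Fin m → ℕ) (r : Fin m → T K s) (lc : Fin m → ℕ → T K s) :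
    Set (Polynomial (T K s)) := Set.range (hRel K s d r lc)
section Aux

variable (K : Type*) [Field K] (s : ℕ)

/-- The grading homomorphism `Φ : T → T[X]`, sending a homogeneous element of degree `n`
to `X^n` times itself.  Its coefficients give the homogeneous components. -/
def Phi : T K s →ₐ[K] Polynomial (T K s) :=
  FreeAlgebra.lift K fun i => Polynomial.X * Polynomial.C (FreeAlgebra.ι K i)

lemma Phi_iota (i : Fin s) :
    Phi K s (FreeAlgebra.ι K i) = Polynomial.monomial 1 (FreeAlgebra.ι K i) := by
  rw [Phi, FreeAlgebra.lift_ι_apply, ← Polynomial.C_mul_X_eq_monomial, Polynomial.X_mul]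

lemma Tgrade_mul {a b : ℕ} {x y : T K s} (hx : x ∈ Tgrade K s a) (hy : y ∈ Tgrade K s b) :
    x * y ∈ Tgrade K s (a + b) := by
  rw [Tgrade, pow_add]
  exact Submodule.mul_mem_mul hx hy

lemma Phi_V {v : T K s} (hv : v ∈ V K s) : Phi K s v = Polynomial.monomial 1 v := by
  induction hv using Submodule.span_induction with
  | mem x hx => obtain ⟨i, rfl⟩ := hx; exact Phi_iota K s i
  | zero => simp
  | add x y _ _ hx hy => rw [map_add, hx, hy, map_add]
  | smul c x _ hx => rw [map_smul, hx, Polynomial.smul_monomial]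

lemma Phi_grade {n : ℕ} {x : T K s} (hx : x ∈ Tgrade K s n) :
    Phi K s x = Polynomial.monomial n x := by
  induction n generalizing x with
  | zero =>
    rw [Tgrade, pow_zero, Submodule.mem_one] at hx
    obtain ⟨y, rfl⟩ := hx
    rw [AlgHom.commutes]
    simp [Polynomial.algebraMap_apply]
  | succ n ih =>
    rw [Tgrade, pow_succ'] at hx
    induction hx using Submodule.mul_induction_on' with
    | mem_mul_mem v hv y hy =>
      rw [map_mul, Phi_V K s hv, ih hy, Polynomial.monomial_mul_monomial, add_comm]
    | add x hx y hy ihx ihy => rw [map_add, ihx, ihy, map_add]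

lemma Phi_coeff_mem (x : T K s) (n : ℕ) : (Phi K s x).coeff n ∈ Tgrade K s n := by
  induction x using FreeAlgebra.induction generalizing n with
  | grade0 r =>
    rw [AlgHom.commutes, Polynomial.algebraMap_apply]
    rw [Polynomial.coeff_C]
    split
    · subst ‹n = 0›; exact Submodule.mem_one.mpr ⟨r, rfl⟩
    · exact zero_mem _
  | grade1 i =>
    rw [Phi_iota, Polynomial.coeff_monomial]
    split
    · subst ‹1 = n›
      rw [Tgrade, pow_one]
      exact Submodule.subset_span ⟨i, rfl⟩
    · exact zero_mem _
  | mul x y hx hy =>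
    rw [map_mul, Polynomial.coeff_mul]
    refine Submodule.sum_mem _ fun p hp => ?_
    rw [Finset.HasAntidiagonal.mem_antidiagonal] at hp
    exact hp ▸ Tgrade_mul K s (hx p.1) (hy p.2)
  | add x y hx hy =>
    rw [map_add, Polynomial.coeff_add]
    exact add_mem (hx n) (hy n)

end Aux
section Aux2

variable (K : Type*) [Field K] (s : ℕ)

/-- Evaluation at `z = 1` as an algebra homomorphism. -/
def evT : Polynomial (T K s) →ₐ[K] T K s :=
  Polynomial.eval₂AlgHom (AlgHom.id K (T K s)) 1 fun a => Commute.one_right a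

lemma evT_apply (w : Polynomial (T K s)) : evT K s w = Polynomial.eval 1 w := rfl

lemma evT_Phi (x : T K s) : evT K s (Phi K s x) = x := by
  have : (evT K s).comp (Phi K s) = AlgHom.id K (T K s) := by
    apply FreeAlgebra.hom_ext
    funext i
    simp only [Function.comp_apply, AlgHom.coe_comp, AlgHom.id_apply, Phi_iota]
    rw [evT_apply]
    simp
  exact congrArg (fun f => f x) (congrArg DFunLike.coe this)

lemma sum_proj (x : T K s) :
    ∑ n ∈ (Phi K s x).support, (Phi K s x).coeff n = x := by
  conv_rhs => rw [← evT_Phi K s x]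
  rw [evT_apply, Polynomial.eval_eq_sum, Polynomial.sum]
  simp

lemma Tgrade_le_Ffilt {j u : ℕ} (h : j ≤ u) : Tgrade K s j ≤ Ffilt K s u := by
  rw [Ffilt]
  exact le_biSup _ h

lemma Ffilt_mono {u u' : ℕ} (h : u ≤ u') : Ffilt K s u ≤ Ffilt K s u' := by
  rw [Ffilt]
  exact iSup₂_le fun i hi => Tgrade_le_Ffilt K s (hi.trans h)

lemma coeff_Phi_eq_zero_of_mem_Ffilt {x : T K s} {u : ℕ} (hx : x ∈ Ffilt K s u)
    {n : ℕ} (hn : u < n) : (Phi K s x).coeff n = 0 := by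
  rw [Ffilt] at hx
  induction hx using Submodule.iSup_induction' with
  | mem j y hy =>
    induction hy using Submodule.iSup_induction' with
    | mem hj y hy =>
      rw [Phi_grade K s hy, Polynomial.coeff_monomial, if_neg (by omega)]
    | zero => simp
    | add a b _ _ ha hb => rw [map_add, Polynomial.coeff_add, ha, hb, add_zero]
  | zero => simp
  | add a b _ _ ha hb => rw [map_add, Polynomial.coeff_add, ha, hb, add_zero]

lemma sum_range_coeff_Phi {x : T K s} {u : ℕ} (hx : x ∈ Ffilt K s u) :
    ∑ j ∈ Finset.range (u + 1), (Phi K s x).coeff j = x := by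
  conv_rhs => rw [← sum_proj K s x]
  refine (Finset.sum_subset ?_ ?_).symm
  · intro j hj
    rw [Finset.mem_range]
    by_contra h
    exact (Polynomial.mem_support_iff.mp hj) (coeff_Phi_eq_zero_of_mem_Ffilt K s hx (by omega))
  · intro j _ hj
    exact Polynomial.notMem_support_iff.mp hj

end Aux2
section Aux3

variable (K : Type*) [Field K] (s : ℕ)

lemma C_X_commute (q : Polynomial (Polynomial (T K s))) :
    Commute (Polynomial.C (Polynomial.X : Polynomial (T K s))) q := by
  rw [Commute, SemiconjBy]
  ext n mth
  rw [Polynomial.coeff_C_mul, Polynomial.coeff_mul_C, Polynomial.X_mul]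

/-- The bigrading homomorphism `Ψ : T[z] → T[z][X]`: a polynomial whose total degree-`n`
part is `w_n` maps to `Σ X^n w_n`. -/
def Psi : Polynomial (T K s) →ₐ[K] Polynomial (Polynomial (T K s)) :=
  Polynomial.eval₂AlgHom
    ((Polynomial.mapAlgHom (Polynomial.CAlgHom)).comp (Phi K s))
    (Polynomial.C Polynomial.X * Polynomial.X)
    (fun _ => Commute.mul_right ((C_X_commute K s _).symm) (Polynomial.commute_X _).symm)

lemma Psi_C (t : T K s) :
    Psi K s (Polynomial.C t) = Polynomial.map Polynomial.C (Phi K s t) := by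
  rw [Psi]
  simp only [Polynomial.eval₂AlgHom_apply, Polynomial.eval₂_C]
  rfl

lemma Psi_X :
    Psi K s Polynomial.X = Polynomial.C Polynomial.X * Polynomial.X := by
  rw [Psi]
  simp [Polynomial.eval₂AlgHom_apply]

lemma Psi_monomial (e : ℕ) (t : T K s) :
    Psi K s (Polynomial.monomial e t)
      = Polynomial.map Polynomial.C (Phi K s t)
          * Polynomial.C (Polynomial.X ^ e) * Polynomial.X ^ e := by
  rw [← Polynomial.C_mul_X_pow_eq_monomial, map_mul, map_pow, Psi_C, Psi_X,
    (C_X_commute K s Polynomial.X).mul_pow, ← Polynomial.C_pow, ← mul_assoc]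

lemma coeff_coeff_Psi (w : Polynomial (T K s)) (c j : ℕ) :
    ((Psi K s w).coeff c).coeff j
      = if j ≤ c then (Phi K s (w.coeff j)).coeff (c - j) else 0 := by
  induction w using Polynomial.induction_on' with
  | add p q hp hq =>
    rw [map_add, Polynomial.coeff_add, Polynomial.coeff_add, hp, hq, Polynomial.coeff_add,
      map_add, Polynomial.coeff_add]
    split <;> simp
  | monomial e t =>
    rw [Psi_monomial, Polynomial.coeff_mul_X_pow', Polynomial.coeff_monomial]
    by_cases hec : e ≤ c
    · rw [if_pos hec, Polynomial.coeff_mul_C, Polynomial.coeff_map,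
        Polynomial.C_mul_X_pow_eq_monomial, Polynomial.coeff_monomial]
      by_cases hej : e = j
      · subst hej
        rw [if_pos rfl, if_pos rfl, if_pos hec]
      · rw [if_neg hej, if_neg hej]
        split
        · rw [map_zero, Polynomial.coeff_zero]
        · rfl
    · rw [if_neg hec, Polynomial.coeff_zero]
      split
      · rename_i h
        rw [if_neg (show ¬ e = j by omega), map_zero, Polynomial.coeff_zero]
      · rfl

end Aux3
section Aux4

variable (K : Type*) [Field K] (s : ℕ)

lemma homogZ_iff_Psi {n : ℕ} {w : Polynomial (T K s)} :
    homogZ K s n w ↔ Psi K s w = Polynomial.monomial n w := by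
  constructor
  · rintro ⟨h1, h2⟩
    ext c j
    rw [coeff_coeff_Psi, Polynomial.coeff_monomial]
    by_cases hcn : n = c
    · subst hcn
      rw [if_pos rfl]
      by_cases hjn : j ≤ n
      · rw [if_pos hjn, Phi_grade K s (h1 j hjn), Polynomial.coeff_monomial, if_pos rfl]
      · rw [if_neg hjn, h2 j (by omega)]
    · rw [if_neg hcn, Polynomial.coeff_zero]
      by_cases hjc : j ≤ c
      · rw [if_pos hjc]
        by_cases hjn : j ≤ n
        · rw [Phi_grade K s (h1 j hjn), Polynomial.coeff_monomial, if_neg (by omega)]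
        · rw [h2 j (by omega), map_zero, Polynomial.coeff_zero]
      · rw [if_neg hjc]
  · intro h
    constructor
    · intro j hj
      have := coeff_coeff_Psi K s w n j
      rw [h, Polynomial.coeff_monomial, if_pos rfl, if_pos hj] at this
      rw [this]
      exact Phi_coeff_mem K s _ _
    · intro j hj
      have key : ∀ c, (Phi K s (w.coeff j)).coeff c = 0 := by
        intro c
        have := coeff_coeff_Psi K s w (j + c) j
        rw [h, Polynomial.coeff_monomial, if_neg (by omega), Polynomial.coeff_zero,
          if_pos (by omega)] at this
        rw [show j + c - j = c by omega] at this
        exact this.symm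
      have := sum_proj K s (w.coeff j)
      rw [← this]
      exact Finset.sum_eq_zero fun c _ => key c

lemma homogZ_coeff_Psi (w : Polynomial (T K s)) (c : ℕ) :
    homogZ K s c ((Psi K s w).coeff c) := by
  constructor
  · intro j hj
    rw [coeff_coeff_Psi, if_pos hj]
    exact Phi_coeff_mem K s _ _
  · intro j hj
    rw [coeff_coeff_Psi, if_neg (by omega)]

lemma evT_mem_Ffilt {n : ℕ} {q : Polynomial (T K s)} (hq : homogZ K s n q) :
    evT K s q ∈ Ffilt K s n := by
  rw [evT_apply, Polynomial.eval_eq_sum, Polynomial.sum]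
  refine Submodule.sum_mem _ fun j _ => ?_
  rw [one_pow, mul_one]
  by_cases hjn : j ≤ n
  · exact Tgrade_le_Ffilt K s (Nat.sub_le n j) (hq.1 j hjn)
  · rw [hq.2 j (by omega)]
    exact zero_mem _

lemma homogZ_zero (n : ℕ) : homogZ K s n (0 : Polynomial (T K s)) :=
  ⟨fun j _ => by rw [Polynomial.coeff_zero]; exact zero_mem _,
   fun j _ => Polynomial.coeff_zero j⟩

lemma homogZ_add {n : ℕ} {w w' : Polynomial (T K s)} (h : homogZ K s n w)
    (h' : homogZ K s n w') : homogZ K s n (w + w') :=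
  ⟨fun j hj => by rw [Polynomial.coeff_add]; exact add_mem (h.1 j hj) (h'.1 j hj),
   fun j hj => by rw [Polynomial.coeff_add, h.2 j hj, h'.2 j hj, add_zero]⟩

lemma homogZ_smul {n : ℕ} {w : Polynomial (T K s)} (c : K) (h : homogZ K s n w) :
    homogZ K s n (c • w) :=
  ⟨fun j hj => by rw [Polynomial.coeff_smul]; exact Submodule.smul_mem _ c (h.1 j hj),
   fun j hj => by rw [Polynomial.coeff_smul, h.2 j hj, smul_zero]⟩

end Aux4
section Aux5

variable (K : Type*) [Field K] (s : ℕ) {m : ℕ}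
variable (d : Fin m → ℕ) (r l : Fin m → T K s) (lc : Fin m → ℕ → T K s)

lemma homogZ_hRel (hd : ∀ i, 2 ≤ d i) (hr : ∀ i, r i ∈ Tgrade K s (d i))
    (hlc : ∀ i j, lc i j ∈ Tgrade K s j) (i : Fin m) :
    homogZ K s (d i) (hRel K s d r lc i) := by
  have hco : ∀ c, (hRel K s d r lc i).coeff c
      = (if c = 0 then r i else 0)
        + ∑ j ∈ Finset.range (d i), (if d i - j = c then lc i j else 0) := by
    intro c
    rw [hRel, Polynomial.coeff_add, Polynomial.coeff_C, Polynomial.finset_sum_coeff]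
    simp only [Polynomial.coeff_monomial]
  constructor
  · intro c hc
    rw [hco]
    by_cases hc0 : c = 0
    · subst hc0
      rw [if_pos rfl]
      have : ∑ j ∈ Finset.range (d i), (if d i - j = 0 then lc i j else 0) = 0 :=
        Finset.sum_eq_zero fun j hj => if_neg (by rw [Finset.mem_range] at hj; omega)
      rw [this, add_zero, Nat.sub_zero]
      exact hr i
    · rw [if_neg hc0, zero_add]
      have : ∑ j ∈ Finset.range (d i), (if d i - j = c then lc i j else 0)
          = lc i (d i - c) := by
        rw [Finset.sum_eq_single (d i - c)]
        · rw [if_pos (by omega)]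
        · intro j hj hne
          rw [Finset.mem_range] at hj
          exact if_neg (by omega)
        · intro h
          exact absurd (Finset.mem_range.mpr (by omega)) h
      rw [this]
      have : d i - (d i - c) = c := by omega
      exact this ▸ hlc i (d i - c)
  · intro c hc
    rw [hco, if_neg (by omega), zero_add]
    exact Finset.sum_eq_zero fun j hj => if_neg (by rw [Finset.mem_range] at hj; omega)

lemma evT_hRel (hl : ∀ i, l i = ∑ j ∈ Finset.range (d i), lc i j) (i : Fin m) :
    evT K s (hRel K s d r lc i) = r i + l i := by
  rw [evT_apply, hRel, Polynomial.eval_add, Polynomial.eval_C, Polynomial.eval_finset_sum, hl]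
  congr 1
  exact Finset.sum_congr rfl fun j _ => by rw [Polynomial.eval_monomial, one_pow, mul_one]

lemma p_mem_Ffilt_iff (hd : ∀ i, 2 ≤ d i) (hr : ∀ i, r i ∈ Tgrade K s (d i))
    (hr0 : ∀ i, r i ≠ 0) (hlc : ∀ i j, lc i j ∈ Tgrade K s j)
    (hl : ∀ i, l i = ∑ j ∈ Finset.range (d i), lc i j) (i : Fin m) (n : ℕ) :
    r i + l i ∈ Ffilt K s n ↔ d i ≤ n := by
  constructor
  · intro h
    by_contra hn
    have h1 : (Phi K s (r i + l i)).coeff (d i) = r i := by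
      rw [map_add, Polynomial.coeff_add, Phi_grade K s (hr i), Polynomial.coeff_monomial,
        if_pos rfl, hl, map_sum, Polynomial.finset_sum_coeff]
      have : ∑ j ∈ Finset.range (d i), (Phi K s (lc i j)).coeff (d i) = 0 :=
        Finset.sum_eq_zero fun j hj => by
          rw [Phi_grade K s (hlc i j), Polynomial.coeff_monomial,
            if_neg (by rw [Finset.mem_range] at hj; omega)]
      rw [this, add_zero]
    have h2 := coeff_Phi_eq_zero_of_mem_Ffilt K s h (show n < d i by omega)
    exact hr0 i (by rw [← h1, h2])
  · intro h
    refine add_mem (Tgrade_le_Ffilt K s h (hr i)) ?_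
    rw [hl]
    refine Submodule.sum_mem _ fun j hj => ?_
    rw [Finset.mem_range] at hj
    exact Tgrade_le_Ffilt K s (by omega) (hlc i j)

/-- The auxiliary submodule `Q_k = Σ_{u + d_i + v ≤ k} F^u T · p_i · F^v T`. -/
def Qk (k : ℕ) : Submodule K (T K s) :=
  ⨆ (i : Fin m) (u : ℕ) (v : ℕ) (_ : u + d i + v ≤ k),
    Ffilt K s u * Submodule.span K {r i + l i} * Ffilt K s v

lemma term_le_Qk {i : Fin m} {u v k : ℕ} (h : u + d i + v ≤ k) :
    Ffilt K s u * Submodule.span K {r i + l i} * Ffilt K s v ≤ Qk K s d r l k := by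
  rw [Qk]
  exact le_iSup_of_le i (le_iSup_of_le u (le_iSup_of_le v (le_iSup_of_le h le_rfl)))

end Aux5
section Aux6

variable (K : Type*) [Field K] (s : ℕ) {m : ℕ}
variable (d : Fin m → ℕ) (r l : Fin m → T K s) (lc : Fin m → ℕ → T K s)

lemma ev_coeff_Psi_mem_Qk (hd : ∀ i, 2 ≤ d i) (hr : ∀ i, r i ∈ Tgrade K s (d i))
    (hlc : ∀ i j, lc i j ∈ Tgrade K s j)
    (hl : ∀ i, l i = ∑ j ∈ Finset.range (d i), lc i j)
    {w : Polynomial (T K s)} (hw : w ∈ TwoSidedIdeal.span (hPset K s d r lc)) (n : ℕ) :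
    evT K s ((Psi K s w).coeff n) ∈ Qk K s d r l n := by
  rw [TwoSidedIdeal.mem_span_iff_mem_addSubgroup_closure] at hw
  induction hw using AddSubgroup.closure_induction with
  | mem x hx =>
    obtain ⟨ag, hag, b, -, rfl⟩ := Set.mem_mul.mp hx
    obtain ⟨a, -, g, hg, rfl⟩ := Set.mem_mul.mp hag
    obtain ⟨i, rfl⟩ := hg
    have hPsirel : Psi K s (hRel K s d r lc i)
        = Polynomial.monomial (d i) (hRel K s d r lc i) :=
      (homogZ_iff_Psi K s).mp (homogZ_hRel K s d r lc hd hr hlc i)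
    have expand : Psi K s (a * hRel K s d r lc i * b)
        = Psi K s a * Polynomial.C (hRel K s d r lc i) * Psi K s b
            * Polynomial.X ^ (d i) := by
      rw [map_mul, map_mul, hPsirel, ← Polynomial.C_mul_X_pow_eq_monomial,
        ← mul_assoc, mul_assoc _ _ (Psi K s b), Polynomial.X_pow_mul, ← mul_assoc]
    rw [expand, Polynomial.coeff_mul_X_pow']
    by_cases hdn : d i ≤ n
    · rw [if_pos hdn, Polynomial.coeff_mul, map_sum]
      refine Submodule.sum_mem _ fun p hp => ?_
      rw [Finset.HasAntidiagonal.mem_antidiagonal] at hp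
      rw [Polynomial.coeff_mul_C, map_mul, map_mul, evT_hRel K s d r l lc hl i]
      refine term_le_Qk K s d r l (show p.1 + d i + p.2 ≤ n by omega) ?_
      exact Submodule.mul_mem_mul (Submodule.mul_mem_mul
        (evT_mem_Ffilt K s (homogZ_coeff_Psi K s a p.1))
        (Submodule.mem_span_singleton_self _))
        (evT_mem_Ffilt K s (homogZ_coeff_Psi K s b p.2))
    · rw [if_neg hdn, map_zero]
      exact zero_mem _
  | zero =>
    rw [map_zero, Polynomial.coeff_zero, map_zero]
    exact zero_mem _
  | add x y _ _ hx hy =>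
    rw [map_add, Polynomial.coeff_add, map_add]
    exact add_mem hx hy
  | neg x _ hx =>
    rw [map_neg, Polynomial.coeff_neg, map_neg]
    exact neg_mem hx

end Aux6
section Aux7

variable (K : Type*) [Field K] (s : ℕ) {m : ℕ}
variable (d : Fin m → ℕ) (r l : Fin m → T K s) (lc : Fin m → ℕ → T K s)

/-- Homogenization of degree `u` of an element of `F^u T`. -/
def hpoly (u : ℕ) (f : T K s) : Polynomial (T K s) :=
  ∑ j ∈ Finset.range (u + 1), Polynomial.monomial (u - j) ((Phi K s f).coeff j)

lemma evT_hpoly {u : ℕ} {f : T K s} (hf : f ∈ Ffilt K s u) :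
    evT K s (hpoly K s u f) = f := by
  rw [hpoly, map_sum,
    Finset.sum_congr rfl fun j (_ : j ∈ Finset.range (u+1)) => by
      rw [evT_apply, Polynomial.eval_monomial, one_pow, mul_one]]
  exact sum_range_coeff_Phi K s hf

lemma coeff_hpoly (u : ℕ) (f : T K s) (c : ℕ) :
    (hpoly K s u f).coeff c
      = if c ≤ u then (Phi K s f).coeff (u - c) else 0 := by
  rw [hpoly, Polynomial.finset_sum_coeff]
  by_cases hcu : c ≤ u
  · rw [if_pos hcu, Finset.sum_eq_single (u - c)]
    · rw [Polynomial.coeff_monomial, if_pos (by omega)]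
    · intro j hj hne
      rw [Finset.mem_range] at hj
      rw [Polynomial.coeff_monomial, if_neg (by omega)]
    · intro h
      exact absurd (Finset.mem_range.mpr (by omega)) h
  · rw [if_neg hcu]
    exact Finset.sum_eq_zero fun j hj => by
      rw [Finset.mem_range] at hj
      rw [Polynomial.coeff_monomial, if_neg (by omega)]

lemma homogZ_hpoly (u : ℕ) (f : T K s) : homogZ K s u (hpoly K s u f) := by
  constructor
  · intro j hj
    rw [coeff_hpoly, if_pos hj]
    exact Phi_coeff_mem K s f (u - j)
  · intro j hj
    rw [coeff_hpoly, if_neg (by omega)]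

/-- The submodule of elements of `T` that are the evaluation at `1` of a degree-`k`
homogeneous element of the ideal. -/
def MapSub (k : ℕ) : Submodule K (T K s) where
  carrier := {x | ∃ w, (w ∈ TwoSidedIdeal.span (hPset K s d r lc) ∧ homogZ K s k w)
      ∧ Polynomial.eval 1 w = x}
  add_mem' := by
    rintro a b ⟨w, ⟨hwI, hwk⟩, rfl⟩ ⟨w', ⟨hwI', hwk'⟩, rfl⟩
    exact ⟨w + w', ⟨add_mem hwI hwI', homogZ_add K s hwk hwk'⟩, Polynomial.eval_add⟩
  zero_mem' := ⟨0, ⟨zero_mem _, homogZ_zero K s k⟩, Polynomial.eval_zero⟩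
  smul_mem' := by
    rintro c x ⟨w, ⟨hwI, hwk⟩, rfl⟩
    refine ⟨c • w, ⟨?_, homogZ_smul K s c hwk⟩, Polynomial.eval_smul c w 1⟩
    rw [Algebra.smul_def]
    exact TwoSidedIdeal.mul_mem_left _ _ _ hwI

lemma Qk_le_MapSub (hd : ∀ i, 2 ≤ d i) (hr : ∀ i, r i ∈ Tgrade K s (d i))
    (hlc : ∀ i j, lc i j ∈ Tgrade K s j)
    (hl : ∀ i, l i = ∑ j ∈ Finset.range (d i), lc i j) (k : ℕ) :
    Qk K s d r l k ≤ MapSub K s d r lc k := by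
  rw [Qk]
  refine iSup_le fun i => iSup_le fun u => iSup_le fun v => iSup_le fun huv => ?_
  intro x hx
  induction hx using Submodule.mul_induction_on' with
  | mem_mul_mem y hy g hg =>
    induction hy using Submodule.mul_induction_on' with
    | mem_mul_mem f hf p hp =>
      obtain ⟨c, rfl⟩ := Submodule.mem_span_singleton.mp hp
      have key : f * (r i + l i) * g ∈ MapSub K s d r lc k := by
        refine ⟨hpoly K s u f * (hRel K s d r lc i * (hpoly K s v g
          * Polynomial.X ^ (k - (u + d i + v)))), ⟨?_, ?_⟩, ?_⟩
        · exact TwoSidedIdeal.mul_mem_left _ _ _ (TwoSidedIdeal.mul_mem_right _ _ _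
            (TwoSidedIdeal.subset_span ⟨i, rfl⟩))
        · rw [homogZ_iff_Psi, map_mul, map_mul, map_mul, map_pow,
            (homogZ_iff_Psi K s).mp (homogZ_hpoly K s u f),
            (homogZ_iff_Psi K s).mp (homogZ_hRel K s d r lc hd hr hlc i),
            (homogZ_iff_Psi K s).mp (homogZ_hpoly K s v g),
            Psi_X, (C_X_commute K s Polynomial.X).mul_pow, ← Polynomial.C_pow,
            Polynomial.C_mul_X_pow_eq_monomial, Polynomial.monomial_mul_monomial,
            Polynomial.monomial_mul_monomial, Polynomial.monomial_mul_monomial]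
          rw [show u + (d i + (v + (k - (u + d i + v)))) = k by omega]
        · rw [← evT_apply, map_mul, map_mul, map_mul, map_pow, evT_hpoly K s hf,
            evT_hpoly K s hg, evT_hRel K s d r l lc hl i]
          rw [evT_apply, Polynomial.eval_X, one_pow, mul_one, ← mul_assoc]
      have : f * c • (r i + l i) * g = c • (f * (r i + l i) * g) := by
        rw [mul_smul_comm, smul_mul_assoc]
      rw [this]
      exact Submodule.smul_mem _ c key
    | add y y' _ _ hy hy' =>
      rw [add_mul]
      exact add_mem hy hy'
  | add y y' _ _ hy hy' => exact add_mem hy hy'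

end Aux7
section Aux8

variable (K : Type*) [Field K] (s : ℕ) {m : ℕ}
variable (d : Fin m → ℕ) (r l : Fin m → T K s) (lc : Fin m → ℕ → T K s)

lemma Ffilt_zero : Ffilt K s 0 = 1 := by
  apply le_antisymm
  · rw [Ffilt]
    refine iSup₂_le fun i hi => ?_
    obtain rfl := Nat.le_zero.mp hi
    rw [Tgrade, pow_zero]
  · have h := Tgrade_le_Ffilt K s (le_refl 0)
    rwa [Tgrade, pow_zero] at h

lemma V_mul_Ffilt (u : ℕ) : V K s * Ffilt K s u ≤ Ffilt K s (u + 1) := by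
  rw [Ffilt, Submodule.mul_iSup]
  refine iSup_le fun i => ?_
  rw [Submodule.mul_iSup]
  refine iSup_le fun hi => ?_
  rw [show V K s * Tgrade K s i = Tgrade K s (i + 1) from by
    rw [Tgrade, Tgrade, ← pow_succ']]
  exact Tgrade_le_Ffilt K s (by omega)

lemma Ffilt_mul_V (u : ℕ) : Ffilt K s u * V K s ≤ Ffilt K s (u + 1) := by
  rw [Ffilt, Submodule.iSup_mul]
  refine iSup_le fun i => ?_
  rw [Submodule.iSup_mul]
  refine iSup_le fun hi => ?_
  rw [show Tgrade K s i * V K s = Tgrade K s (i + 1) from by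
    rw [Tgrade, Tgrade, ← pow_succ]]
  exact Tgrade_le_Ffilt K s (by omega)

lemma Ffilt_succ_le (u : ℕ) : Ffilt K s (u + 1) ≤ Ffilt K s u ⊔ V K s * Ffilt K s u := by
  rw [Ffilt]
  refine iSup₂_le fun i hi => ?_
  rcases Nat.lt_or_ge i (u + 1) with h | h
  · exact le_sup_of_le_left (Tgrade_le_Ffilt K s (by omega))
  · obtain rfl : i = u + 1 := by omega
    refine le_sup_of_le_right ?_
    rw [show Tgrade K s (u + 1) = V K s * Tgrade K s u from by
      rw [Tgrade, Tgrade, ← pow_succ']]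
    exact mul_le_mul' le_rfl (Tgrade_le_Ffilt K s le_rfl)

lemma Ffilt_succ_le' (u : ℕ) : Ffilt K s (u + 1) ≤ Ffilt K s u ⊔ Ffilt K s u * V K s := by
  rw [Ffilt]
  refine iSup₂_le fun i hi => ?_
  rcases Nat.lt_or_ge i (u + 1) with h | h
  · exact le_sup_of_le_left (Tgrade_le_Ffilt K s (by omega))
  · obtain rfl : i = u + 1 := by omega
    refine le_sup_of_le_right ?_
    rw [show Tgrade K s (u + 1) = Tgrade K s u * V K s from by
      rw [Tgrade, Tgrade, ← pow_succ]]
    exact mul_le_mul' (Tgrade_le_Ffilt K s le_rfl) le_rfl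

lemma Pk_mono (Pset : Set (T K s)) : ∀ k, Pk K s Pset k ≤ Pk K s Pset (k + 1)
  | 0 => bot_le
  | k + 1 => by
    show V K s * Pk K s Pset k + Pk K s Pset k * V K s
        + Submodule.span K (Pset ∩ (Ffilt K s (k + 1) : Set (T K s)))
      ≤ V K s * Pk K s Pset (k + 1) + Pk K s Pset (k + 1) * V K s
        + Submodule.span K (Pset ∩ (Ffilt K s (k + 2) : Set (T K s)))
    rw [Submodule.add_eq_sup, Submodule.add_eq_sup, Submodule.add_eq_sup,
      Submodule.add_eq_sup]
    refine sup_le (sup_le ?_ ?_) ?_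
    · exact le_sup_of_le_left (le_sup_of_le_left
        (mul_le_mul' le_rfl (Pk_mono Pset k)))
    · exact le_sup_of_le_left (le_sup_of_le_right
        (mul_le_mul' (Pk_mono Pset k) le_rfl))
    · exact le_sup_of_le_right (Submodule.span_mono
        (Set.inter_subset_inter_right _ (Ffilt_mono K s (by omega))))

lemma span_inter (hd : ∀ i, 2 ≤ d i) (hr : ∀ i, r i ∈ Tgrade K s (d i))
    (hr0 : ∀ i, r i ≠ 0) (hlc : ∀ i j, lc i j ∈ Tgrade K s j)
    (hl : ∀ i, l i = ∑ j ∈ Finset.range (d i), lc i j) (n : ℕ) :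
    Submodule.span K (PsetOf K s r l ∩ (Ffilt K s n : Set (T K s)))
      = ⨆ (i : Fin m) (_ : d i ≤ n), Submodule.span K {r i + l i} := by
  apply le_antisymm
  · rw [Submodule.span_le]
    rintro x ⟨⟨i, rfl⟩, hx2⟩
    have hdi : d i ≤ n :=
      (p_mem_Ffilt_iff K s d r l lc hd hr hr0 hlc hl i n).mp hx2
    exact Submodule.mem_iSup_of_mem i (Submodule.mem_iSup_of_mem hdi
      (Submodule.mem_span_singleton_self _))
  · refine iSup_le fun i => iSup_le fun hdi => Submodule.span_le.mpr ?_
    rintro x hx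
    obtain rfl := Set.mem_singleton_iff.mp hx
    exact Submodule.subset_span
      ⟨⟨i, rfl⟩, (p_mem_Ffilt_iff K s d r l lc hd hr hr0 hlc hl i n).mpr hdi⟩

end Aux8
section Aux9

variable (K : Type*) [Field K] (s : ℕ) {m : ℕ}
variable (d : Fin m → ℕ) (r l : Fin m → T K s) (lc : Fin m → ℕ → T K s)

lemma Pk_le_Qk (hd : ∀ i, 2 ≤ d i) (hr : ∀ i, r i ∈ Tgrade K s (d i))
    (hr0 : ∀ i, r i ≠ 0) (hlc : ∀ i j, lc i j ∈ Tgrade K s j)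
    (hl : ∀ i, l i = ∑ j ∈ Finset.range (d i), lc i j) :
    ∀ k, Pk K s (PsetOf K s r l) k ≤ Qk K s d r l k
  | 0 => bot_le
  | k + 1 => by
    show V K s * Pk K s (PsetOf K s r l) k + Pk K s (PsetOf K s r l) k * V K s
        + Submodule.span K (PsetOf K s r l ∩ (Ffilt K s (k + 1) : Set (T K s)))
      ≤ Qk K s d r l (k + 1)
    rw [Submodule.add_eq_sup, Submodule.add_eq_sup]
    refine sup_le (sup_le ?_ ?_) ?_
    · refine le_trans (mul_le_mul' le_rfl
        (Pk_le_Qk hd hr hr0 hlc hl k)) ?_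
      rw [Qk, Submodule.mul_iSup]
      refine iSup_le fun i => ?_
      rw [Submodule.mul_iSup]
      refine iSup_le fun u => ?_
      rw [Submodule.mul_iSup]
      refine iSup_le fun v => ?_
      rw [Submodule.mul_iSup]
      refine iSup_le fun huv => ?_
      rw [← mul_assoc, ← mul_assoc]
      refine le_trans (mul_le_mul' (mul_le_mul'
        (V_mul_Ffilt K s u) le_rfl) le_rfl) ?_
      exact term_le_Qk K s d r l (show u + 1 + d i + v ≤ k + 1 by omega)
    · refine le_trans (mul_le_mul'
        (Pk_le_Qk hd hr hr0 hlc hl k) le_rfl) ?_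
      rw [Qk, Submodule.iSup_mul]
      refine iSup_le fun i => ?_
      rw [Submodule.iSup_mul]
      refine iSup_le fun u => ?_
      rw [Submodule.iSup_mul]
      refine iSup_le fun v => ?_
      rw [Submodule.iSup_mul]
      refine iSup_le fun huv => ?_
      rw [mul_assoc]
      refine le_trans (mul_le_mul' le_rfl (Ffilt_mul_V K s v)) ?_
      exact term_le_Qk K s d r l (show u + d i + (v + 1) ≤ k + 1 by omega)
    · rw [span_inter K s d r l lc hd hr hr0 hlc hl (k + 1)]
      refine iSup_le fun i => iSup_le fun hdi => ?_
      refine le_trans ?_ (term_le_Qk K s d r l (show 0 + d i + 0 ≤ k + 1 by omega))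
      rw [Ffilt_zero, one_mul, mul_one]

lemma Qk_le_Pk (hd : ∀ i, 2 ≤ d i) (hr : ∀ i, r i ∈ Tgrade K s (d i))
    (hr0 : ∀ i, r i ≠ 0) (hlc : ∀ i j, lc i j ∈ Tgrade K s j)
    (hl : ∀ i, l i = ∑ j ∈ Finset.range (d i), lc i j) :
    ∀ k, Qk K s d r l k ≤ Pk K s (PsetOf K s r l) k
  | 0 => by
    rw [Qk]
    refine iSup_le fun i => iSup_le fun u => iSup_le fun v => iSup_le fun huv => ?_
    exact absurd huv (by have := hd i; omega)
  | k + 1 => by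
    have hPk : V K s * Pk K s (PsetOf K s r l) k + Pk K s (PsetOf K s r l) k * V K s
        + Submodule.span K (PsetOf K s r l ∩ (Ffilt K s (k + 1) : Set (T K s)))
        = Pk K s (PsetOf K s r l) (k + 1) := rfl
    rw [Qk]
    refine iSup_le fun i => iSup_le fun u => iSup_le fun v => iSup_le fun huv => ?_
    rcases u with _ | u'
    · rcases v with _ | v'
      · rw [Ffilt_zero, one_mul, mul_one, ← hPk, Submodule.add_eq_sup,
          Submodule.add_eq_sup, span_inter K s d r l lc hd hr hr0 hlc hl (k + 1)]
        exact le_sup_of_le_right (le_iSup_of_le i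
          (le_iSup_of_le (show d i ≤ k + 1 by omega) le_rfl))
      · rw [Ffilt_zero, one_mul]
        refine le_trans (mul_le_mul' le_rfl (Ffilt_succ_le' K s v')) ?_
        rw [Submodule.mul_sup]
        have base : Submodule.span K {r i + l i} * Ffilt K s v' ≤ Qk K s d r l k := by
          refine le_trans ?_ (term_le_Qk K s d r l (show 0 + d i + v' ≤ k by omega))
          rw [Ffilt_zero, one_mul]
        refine sup_le ?_ ?_
        · exact le_trans base (le_trans (Qk_le_Pk hd hr hr0 hlc hl k)
            (Pk_mono K s _ k))
        · rw [← mul_assoc]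
          refine le_trans (mul_le_mul'
            (le_trans base (Qk_le_Pk hd hr hr0 hlc hl k)) le_rfl) ?_
          rw [← hPk, Submodule.add_eq_sup, Submodule.add_eq_sup]
          exact le_sup_of_le_left le_sup_right
    · refine le_trans (mul_le_mul' (mul_le_mul'
        (Ffilt_succ_le K s u') le_rfl) le_rfl) ?_
      rw [Submodule.sup_mul, Submodule.sup_mul]
      refine sup_le ?_ ?_
      · refine le_trans ?_ (le_trans (Qk_le_Pk hd hr hr0 hlc hl k) (Pk_mono K s _ k))
        exact term_le_Qk K s d r l (show u' + d i + v ≤ k by omega)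
      · rw [mul_assoc (V K s), mul_assoc (V K s)]
        refine le_trans (mul_le_mul' le_rfl (le_trans ?_
          (Qk_le_Pk hd hr hr0 hlc hl k))) ?_
        · exact term_le_Qk K s d r l (show u' + d i + v ≤ k by omega)
        · rw [← hPk, Submodule.add_eq_sup, Submodule.add_eq_sup]
          exact le_sup_of_le_left le_sup_left

lemma Pk_eq_Qk (hd : ∀ i, 2 ≤ d i) (hr : ∀ i, r i ∈ Tgrade K s (d i))
    (hr0 : ∀ i, r i ≠ 0) (hlc : ∀ i j, lc i j ∈ Tgrade K s j)
    (hl : ∀ i, l i = ∑ j ∈ Finset.range (d i), lc i j) (k : ℕ) :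
    Pk K s (PsetOf K s r l) k = Qk K s d r l k :=
  le_antisymm (Pk_le_Qk K s d r l lc hd hr hr0 hlc hl k)
    (Qk_le_Pk K s d r l lc hd hr hr0 hlc hl k)

end Aux9
theorem eval_one_homogeneous_component_eq_Pk (K : Type*) [Field K] (s : ℕ)
    {m : ℕ} (d : Fin m → ℕ) (r l : Fin m → T K s) (lc : Fin m → ℕ → T K s)
    -- each relation `r_i` of `A` is homogeneous of degree `d_i ≥ 2` and nonzero
    (hd : ∀ i, 2 ≤ d i)
    (hr : ∀ i, r i ∈ Tgrade K s (d i))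
    (hr0 : ∀ i, r i ≠ 0)
    -- `l_i = Σ_{j < d_i} l_{i,j}` with `l_{i,j}` homogeneous of degree `j`, so `deg l_i < d_i`
    (hlc : ∀ i j, lc i j ∈ Tgrade K s j)
    (hl : ∀ i, l i = ∑ j ∈ Finset.range (d i), lc i j)
    (k : ℕ) (hk : 1 ≤ k) :
    -- `φ_1(⟨h(P)⟩_k) = P_k`
    (fun w : Polynomial (T K s) => Polynomial.eval (1 : T K s) w) ''
        {w : Polynomial (T K s) | w ∈ TwoSidedIdeal.span (hPset K s d r lc) ∧ homogZ K s k w}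
      = (Pk K s (PsetOf K s r l) k : Set (T K s)) := by
  apply Set.eq_of_subset_of_subset
  · rintro x ⟨w, ⟨hwI, hwk⟩, rfl⟩
    have h1 : evT K s ((Psi K s w).coeff k) ∈ Qk K s d r l k :=
      ev_coeff_Psi_mem_Qk K s d r l lc hd hr hlc hl hwI k
    have h2 : (Psi K s w).coeff k = w := by
      rw [(homogZ_iff_Psi K s).mp hwk, Polynomial.coeff_monomial, if_pos rfl]
    rw [h2, evT_apply] at h1
    rw [SetLike.mem_coe, Pk_eq_Qk K s d r l lc hd hr hr0 hlc hl k]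
    exact h1
  · intro x hx
    rw [SetLike.mem_coe, Pk_eq_Qk K s d r l lc hd hr hr0 hlc hl k] at hx
    obtain ⟨w, ⟨hwI, hwk⟩, hev⟩ := Qk_le_MapSub K s d r l lc hd hr hlc hl k hx
    exact ⟨w, ⟨hwI, hwk⟩, hev⟩

end PBWPaper
end
end

section
/- The deformation U is a PBW-deformation of A if and only if P_1 = 0 and the Jacobi condition P_{k+1} ∩ F^kT ⊆ P_k holds for every k ≥ 1. -/
open Polynomial

noncomputable section

namespace PBWPaper

variable (K : Type*) [Field K] (s : ℕ)

variable {m : ℕ}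

section AuxProofs

variable {K s}

open Submodule

lemma e_lift (w : FreeMonoid (Fin s)) :
    FreeAlgebra.equivMonoidAlgebraFreeMonoid ((FreeMonoid.lift (FreeAlgebra.ι K)) w)
      = MonoidAlgebra.of K (FreeMonoid (Fin s)) w := by
  induction w using FreeMonoid.recOn with
  | one => simpa using MonoidAlgebra.one_def
  | of_mul x xs ih =>
      rw [map_mul, map_mul, ih, FreeMonoid.lift_eval_of]
      simp [FreeAlgebra.equivMonoidAlgebraFreeMonoid]

lemma basis_apply (w : FreeMonoid (Fin s)) :
    FreeAlgebra.basisFreeMonoid K (Fin s) w = FreeMonoid.lift (FreeAlgebra.ι K) w := by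
  have h : FreeAlgebra.basisFreeMonoid K (Fin s) w
      = (FreeAlgebra.equivMonoidAlgebraFreeMonoid (R := K) (X := Fin s)).symm
          (MonoidAlgebra.of K (FreeMonoid (Fin s)) w) := by
    rw [FreeAlgebra.basisFreeMonoid, Module.Basis.map_apply]; rfl
  rw [h, AlgEquiv.symm_apply_eq, e_lift]

lemma tgrade_le_span (n : ℕ) :
    Tgrade K s n ≤ span K (⇑(FreeAlgebra.basisFreeMonoid K (Fin s)) ''
      {w : FreeMonoid (Fin s) | w.length = n}) := by
  induction n with
  | zero =>
      rw [Tgrade, pow_zero, Submodule.one_eq_span]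
      apply span_le.2
      rintro x rfl
      exact subset_span ⟨1, by simp [FreeMonoid.length_one], by rw [basis_apply]; simp⟩
  | succ n ih =>
      rw [Tgrade, pow_succ, ← Tgrade]
      have hV : V K s ≤ span K (⇑(FreeAlgebra.basisFreeMonoid K (Fin s)) ''
          {w : FreeMonoid (Fin s) | w.length = 1}) := by
        rw [V]
        apply span_le.2
        rintro x ⟨i, rfl⟩
        exact subset_span ⟨FreeMonoid.of i, by simp, by rw [basis_apply]; simp⟩
      calc Tgrade K s n * V K s
          ≤ span K (⇑(FreeAlgebra.basisFreeMonoid K (Fin s)) '' {w : FreeMonoid (Fin s) | w.length = n})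
            * span K (⇑(FreeAlgebra.basisFreeMonoid K (Fin s)) '' {w : FreeMonoid (Fin s) | w.length = 1}) :=
            mul_le_mul' ih hV
        _ ≤ span K (⇑(FreeAlgebra.basisFreeMonoid K (Fin s)) '' {w : FreeMonoid (Fin s) | w.length = n + 1}) := by
            rw [Submodule.span_mul_span]
            apply span_le.2
            rintro x ⟨a, ⟨wa, hwa, rfl⟩, b, ⟨wb, hwb, rfl⟩, rfl⟩
            refine subset_span ⟨wa * wb, ?_, ?_⟩
            · simp only [Set.mem_setOf_eq] at hwa hwb ⊢
              rw [FreeMonoid.length_mul, hwa, hwb]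
            · rw [basis_apply, basis_apply, basis_apply, map_mul]

lemma biSup_tgrade_le_span (A : Set ℕ) :
    (⨆ n ∈ A, Tgrade K s n) ≤ span K (⇑(FreeAlgebra.basisFreeMonoid K (Fin s)) ''
      {w : FreeMonoid (Fin s) | w.length ∈ A}) :=
  iSup₂_le fun n hn => (tgrade_le_span n).trans (span_mono (Set.image_mono fun w hw => by
    simp only [Set.mem_setOf_eq] at hw ⊢; rw [hw]; exact hn))

lemma eq_zero_of_supports {A B : Set ℕ} (hAB : ∀ n, n ∈ A → n ∈ B → False) {x : T K s}
    (hxA : x ∈ ⨆ n ∈ A, Tgrade K s n) (hxB : x ∈ ⨆ n ∈ B, Tgrade K s n) : x = 0 := by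
  have h1 := (FreeAlgebra.basisFreeMonoid K (Fin s)).mem_span_image.1 (biSup_tgrade_le_span A hxA)
  have h2 := (FreeAlgebra.basisFreeMonoid K (Fin s)).mem_span_image.1 (biSup_tgrade_le_span B hxB)
  have hz : (FreeAlgebra.basisFreeMonoid K (Fin s)).repr x = 0 := by
    ext w
    rw [Finsupp.zero_apply]
    by_cases hw : w ∈ ((FreeAlgebra.basisFreeMonoid K (Fin s)).repr x).support
    · exact absurd (h2 hw) (fun hB => hAB _ (h1 hw) hB)
    · exact Finsupp.notMem_support_iff.1 hw
  exact (LinearEquiv.map_eq_zero_iff _).1 hz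

lemma tgrade_le_ffilt {i k : ℕ} (h : i ≤ k) : Tgrade K s i ≤ Ffilt K s k :=
  le_iSup₂_of_le i h le_rfl

lemma ffilt_mono {a b : ℕ} (h : a ≤ b) : Ffilt K s a ≤ Ffilt K s b :=
  iSup₂_le fun i hi => tgrade_le_ffilt (hi.trans h)

lemma ffilt_zero : Ffilt K s 0 = Tgrade K s 0 :=
  le_antisymm (iSup₂_le fun i hi => by rw [Nat.le_zero.1 hi]) (tgrade_le_ffilt le_rfl)

lemma ffilt_succ (k : ℕ) : Ffilt K s (k + 1) = Ffilt K s k ⊔ Tgrade K s (k + 1) :=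
  le_antisymm
    (iSup₂_le fun i hi => by
      rcases Nat.lt_succ_iff_lt_or_eq.1 (Nat.lt_succ_of_le hi) with h | h
      · exact le_sup_of_le_left (tgrade_le_ffilt (Nat.lt_succ_iff.1 h))
      · rw [h]; exact le_sup_right)
    (sup_le (ffilt_mono (Nat.le_succ k)) (tgrade_le_ffilt le_rfl))

lemma ffilt_le_biSup (j : ℕ) (A : Set ℕ) (h : ∀ n ≤ j, n ∈ A) :
    Ffilt K s j ≤ ⨆ n ∈ A, Tgrade K s n :=
  iSup₂_le fun i hi => le_iSup₂_of_le i (h i hi) le_rfl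

lemma tgrade_inf_ffilt {k j : ℕ} (h : j < k) {x : T K s}
    (hx : x ∈ Tgrade K s k) (hx' : x ∈ Ffilt K s j) : x = 0 :=
  eq_zero_of_supports (A := {n | n = k}) (B := {n | n ≤ j})
    (fun n hn hn' => by simp only [Set.mem_setOf_eq] at hn hn'; omega)
    ((show Tgrade K s k ≤ ⨆ n ∈ {n : ℕ | n = k}, Tgrade K s n from
      le_iSup₂_of_le k rfl le_rfl) hx) (ffilt_le_biSup j {n | n ≤ j} (fun n hn => hn) hx')

lemma tgrade_inf_compl {k : ℕ} {x : T K s} (hx : x ∈ Tgrade K s k)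
    (hx' : x ∈ ⨆ n ∈ {n : ℕ | n ≠ k}, Tgrade K s n) : x = 0 :=
  eq_zero_of_supports (A := {n | n = k}) (B := {n | n ≠ k})
    (fun n hn hn' => by simp only [Set.mem_setOf_eq] at hn hn'; exact hn' hn)
    ((show Tgrade K s k ≤ ⨆ n ∈ {n : ℕ | n = k}, Tgrade K s n from
      le_iSup₂_of_le k rfl le_rfl) hx) hx'

lemma tgrade_mul (a b : ℕ) : Tgrade K s a * Tgrade K s b = Tgrade K s (a + b) :=
  (pow_add (V K s) a b).symm

lemma V_mul_tgrade (k : ℕ) : V K s * Tgrade K s k = Tgrade K s (k + 1) := by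
  rw [Tgrade, Tgrade, ← pow_succ']

lemma tgrade_mul_V (k : ℕ) : Tgrade K s k * V K s = Tgrade K s (k + 1) := by
  rw [Tgrade, Tgrade, ← pow_succ]

lemma V_mul_ffilt (k : ℕ) : V K s * Ffilt K s k ≤ Ffilt K s (k + 1) := by
  rw [Ffilt, mul_iSup]
  refine iSup_le fun i => ?_
  rw [mul_iSup]
  refine iSup_le fun hi => ?_
  rw [V_mul_tgrade]
  exact tgrade_le_ffilt (by omega)

lemma ffilt_mul_V (k : ℕ) : Ffilt K s k * V K s ≤ Ffilt K s (k + 1) := by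
  rw [Ffilt, iSup_mul]
  refine iSup_le fun i => ?_
  rw [iSup_mul]
  refine iSup_le fun hi => ?_
  rw [tgrade_mul_V]
  exact tgrade_le_ffilt (by omega)

lemma ffilt_mul_ffilt (a b : ℕ) : Ffilt K s a * Ffilt K s b ≤ Ffilt K s (a + b) := by
  rw [Ffilt, Ffilt, iSup_mul]
  refine iSup_le fun i => ?_
  rw [iSup_mul]
  refine iSup_le fun hi => ?_
  rw [mul_iSup]
  refine iSup_le fun j => ?_
  rw [mul_iSup]
  refine iSup_le fun hj => ?_
  rw [tgrade_mul]
  exact tgrade_le_ffilt (by omega)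

lemma exists_ffilt (x : T K s) : ∃ k, x ∈ Ffilt K s k := by
  induction x using FreeAlgebra.induction with
  | grade0 c =>
      exact ⟨0, by rw [ffilt_zero, Tgrade, pow_zero]; exact (Submodule.mem_one).2 ⟨c, rfl⟩⟩
  | grade1 i =>
      exact ⟨1, tgrade_le_ffilt le_rfl (by rw [Tgrade, pow_one]; exact subset_span ⟨i, rfl⟩)⟩
  | mul a b ha hb =>
      obtain ⟨ka, hka⟩ := ha; obtain ⟨kb, hkb⟩ := hb
      exact ⟨ka + kb, ffilt_mul_ffilt ka kb (mul_mem_mul hka hkb)⟩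
  | add a b ha hb =>
      obtain ⟨ka, hka⟩ := ha; obtain ⟨kb, hkb⟩ := hb
      exact ⟨ka ⊔ kb, add_mem (ffilt_mono le_sup_left hka) (ffilt_mono le_sup_right hkb)⟩

lemma V_le_ffilt_one : V K s ≤ Ffilt K s 1 := by
  rw [show V K s = Tgrade K s 1 from (pow_one _).symm]
  exact tgrade_le_ffilt le_rfl

lemma pk_succ_le {S : Set (T K s)} {k : ℕ} {M : Submodule K (T K s)}
    (h1 : V K s * Pk K s S k ≤ M) (h2 : Pk K s S k * V K s ≤ M)
    (h3 : Submodule.span K (S ∩ (Ffilt K s (k + 1) : Set (T K s))) ≤ M) :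
    Pk K s S (k + 1) ≤ M := by
  rw [Pk]
  exact sup_le (sup_le h1 h2) h3

lemma le_pk_succ_left {S : Set (T K s)} {k : ℕ} :
    V K s * Pk K s S k ≤ Pk K s S (k + 1) := by
  rw [Pk]; exact le_sup_of_le_left le_sup_left

lemma le_pk_succ_right {S : Set (T K s)} {k : ℕ} :
    Pk K s S k * V K s ≤ Pk K s S (k + 1) := by
  rw [Pk]; exact le_sup_of_le_left le_sup_right

lemma le_pk_succ_span {S : Set (T K s)} {k : ℕ} :
    Submodule.span K (S ∩ (Ffilt K s (k + 1) : Set (T K s))) ≤ Pk K s S (k + 1) := by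
  rw [Pk]; exact le_sup_right

lemma pk_mono_succ (S : Set (T K s)) : ∀ k, Pk K s S k ≤ Pk K s S (k + 1)
  | 0 => bot_le
  | k + 1 => pk_succ_le
      ((mul_le_mul' le_rfl (pk_mono_succ S k)).trans le_pk_succ_left)
      ((mul_le_mul' (pk_mono_succ S k) le_rfl).trans le_pk_succ_right)
      ((span_mono (Set.inter_subset_inter_right _ (ffilt_mono (Nat.le_succ _)))).trans
        le_pk_succ_span)

lemma pk_mono (S : Set (T K s)) : Monotone (Pk K s S) :=
  monotone_nat_of_le_succ (pk_mono_succ S)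

lemma pk_le_ffilt (S : Set (T K s)) : ∀ k, Pk K s S k ≤ Ffilt K s k
  | 0 => bot_le
  | k + 1 => pk_succ_le
      ((mul_le_mul' le_rfl (pk_le_ffilt S k)).trans (V_mul_ffilt k))
      ((mul_le_mul' (pk_le_ffilt S k) le_rfl).trans (ffilt_mul_V k))
      (span_le.2 fun x hx => hx.2)

variable (K s) in
/-- The two-sided ideal generated by `S`, as a `K`-submodule. -/
def idealCarrier (S : Set (T K s)) : Submodule K (T K s) where
  carrier := {x | x ∈ TwoSidedIdeal.span S}
  add_mem' ha hb := (TwoSidedIdeal.span S).add_mem ha hb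
  zero_mem' := (TwoSidedIdeal.span S).zero_mem
  smul_mem' c x hx := by
    simpa [Algebra.smul_def] using (TwoSidedIdeal.span S).mul_mem_left _ _ hx

lemma mem_idealCarrier {S : Set (T K s)} {x : T K s} :
    x ∈ idealCarrier K s S ↔ x ∈ TwoSidedIdeal.span S := Iff.rfl

lemma pk_le_ideal (S : Set (T K s)) : ∀ k, Pk K s S k ≤ idealCarrier K s S
  | 0 => bot_le
  | k + 1 => pk_succ_le
      (Submodule.mul_le.2 fun v _ q hq =>
        (TwoSidedIdeal.span S).mul_mem_left _ _ (pk_le_ideal S k hq))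
      (Submodule.mul_le.2 fun q hq v _ =>
        (TwoSidedIdeal.span S).mul_mem_right _ _ (pk_le_ideal S k hq))
      (span_le.2 fun x hx => TwoSidedIdeal.subset_span hx.1)

lemma tgrade_mul_pk (S : Set (T K s)) (c k : ℕ) :
    Tgrade K s c * Pk K s S k ≤ Pk K s S (c + k) := by
  induction c with
  | zero => rw [Tgrade, pow_zero, Submodule.one_mul, Nat.zero_add]
  | succ c ih =>
      have : Tgrade K s (c + 1) * Pk K s S k = V K s * (Tgrade K s c * Pk K s S k) := by
        rw [← mul_assoc, ← V_mul_tgrade]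
      rw [this]
      exact (mul_le_mul' le_rfl ih).trans
        (le_pk_succ_left.trans (by rw [show c + k + 1 = c + 1 + k by omega]))

lemma pk_mul_tgrade (S : Set (T K s)) (c k : ℕ) :
    Pk K s S k * Tgrade K s c ≤ Pk K s S (k + c) := by
  induction c with
  | zero => rw [Tgrade, pow_zero, Submodule.mul_one, Nat.add_zero]
  | succ c ih =>
      have : Pk K s S k * Tgrade K s (c + 1) = (Pk K s S k * Tgrade K s c) * V K s := by
        rw [mul_assoc, ← tgrade_mul_V]
      rw [this]
      exact (mul_le_mul' ih le_rfl).trans le_pk_succ_right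

lemma ffilt_mul_pk (S : Set (T K s)) (c k : ℕ) :
    Ffilt K s c * Pk K s S k ≤ Pk K s S (c + k) := by
  rw [Ffilt, iSup_mul]
  refine iSup_le fun i => ?_
  rw [iSup_mul]
  refine iSup_le fun hi => ?_
  exact (tgrade_mul_pk S i k).trans (pk_mono S (by omega))

lemma pk_mul_ffilt (S : Set (T K s)) (c k : ℕ) :
    Pk K s S k * Ffilt K s c ≤ Pk K s S (k + c) := by
  rw [Ffilt, mul_iSup]
  refine iSup_le fun i => ?_
  rw [mul_iSup]
  refine iSup_le fun hi => ?_
  exact (pk_mul_tgrade S i k).trans (pk_mono S (by omega))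

lemma mem_iSup_pk {S : Set (T K s)} {x : T K s} :
    x ∈ (⨆ k, Pk K s S k) ↔ ∃ k, x ∈ Pk K s S k :=
  Submodule.mem_iSup_of_directed _ ((pk_mono S).directed_le)

lemma ideal_eq_iSup_pk (S : Set (T K s)) :
    idealCarrier K s S = ⨆ k, Pk K s S k := by
  refine le_antisymm ?_ (iSup_le (pk_le_ideal S))
  set M : Submodule K (T K s) := ⨆ k, Pk K s S k
  have hml : ∀ (a x : T K s), x ∈ M → a * x ∈ M := by
    intro a x hx
    obtain ⟨k, hk⟩ := mem_iSup_pk.1 hx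
    obtain ⟨c, hc⟩ := exists_ffilt a
    exact mem_iSup_pk.2 ⟨c + k, ffilt_mul_pk S c k (mul_mem_mul hc hk)⟩
  have hmr : ∀ (a x : T K s), x ∈ M → x * a ∈ M := by
    intro a x hx
    obtain ⟨k, hk⟩ := mem_iSup_pk.1 hx
    obtain ⟨c, hc⟩ := exists_ffilt a
    exact mem_iSup_pk.2 ⟨k + c, pk_mul_ffilt S c k (mul_mem_mul hk hc)⟩
  intro x hx
  have := TwoSidedIdeal.mem_span_iff.1 hx
    (TwoSidedIdeal.mk' (M : Set (T K s)) M.zero_mem (fun ha hb => M.add_mem ha hb)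
      (fun ha => M.neg_mem ha) (fun {a b} hb => hml a b hb) (fun {a b} ha => hmr b a ha))
    (fun p hp => by
      obtain ⟨k, hk⟩ := exists_ffilt p
      refine (TwoSidedIdeal.mem_mk' _ _ _ _ _ _ _).2 (mem_iSup_pk.2 ⟨k + 1, ?_⟩)
      exact le_pk_succ_span (subset_span ⟨hp, ffilt_mono (Nat.le_succ k) hk⟩))
  exact (TwoSidedIdeal.mem_mk' _ _ _ _ _ _ _).1 this

variable (K s) in
def AR {m : ℕ} (d : Fin m → ℕ) (r : Fin m → T K s) : ℕ → Submodule K (T K s)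
  | 0 => ⊥
  | k + 1 => V K s * AR d r k + AR d r k * V K s +
      Submodule.span K {x | ∃ i, d i = k + 1 ∧ r i = x}

section Rel

variable {m : ℕ} {d : Fin m → ℕ} {r l : Fin m → T K s} {lc : Fin m → ℕ → T K s}

lemma AR_succ_le {k : ℕ} {M : Submodule K (T K s)}
    (h1 : V K s * AR K s d r k ≤ M) (h2 : AR K s d r k * V K s ≤ M)
    (h3 : Submodule.span K {x | ∃ i, d i = k + 1 ∧ r i = x} ≤ M) :
    AR K s d r (k + 1) ≤ M := by
  rw [AR]
  exact sup_le (sup_le h1 h2) h3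

lemma le_AR_succ_left {k : ℕ} : V K s * AR K s d r k ≤ AR K s d r (k + 1) := by
  rw [AR]; exact le_sup_of_le_left le_sup_left

lemma le_AR_succ_right {k : ℕ} : AR K s d r k * V K s ≤ AR K s d r (k + 1) := by
  rw [AR]; exact le_sup_of_le_left le_sup_right

lemma le_AR_succ_span {k : ℕ} :
    Submodule.span K {x | ∃ i, d i = k + 1 ∧ r i = x} ≤ AR K s d r (k + 1) := by
  rw [AR]; exact le_sup_right

section Hyps
variable (hd : ∀ i, 2 ≤ d i) (hr : ∀ i, r i ∈ Tgrade K s (d i)) (hr0 : ∀ i, r i ≠ 0)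
  (hlc : ∀ i j, lc i j ∈ Tgrade K s j) (hl : ∀ i, l i = ∑ j ∈ Finset.range (d i), lc i j)

include hlc hl in
lemma l_mem_ffilt (i : Fin m) : l i ∈ Ffilt K s (d i - 1) := by
  rw [hl i]
  refine Submodule.sum_mem _ fun j hj => ?_
  exact tgrade_le_ffilt (by have := Finset.mem_range.1 hj; omega) (hlc i j)

include hr hr0 hlc hl in
lemma deg_le_of_mem_ffilt {i : Fin m} {k : ℕ} (hmem : r i + l i ∈ Ffilt K s k) :
    d i ≤ k := by
  by_contra hlt
  push_neg at hlt
  have hli : l i ∈ Ffilt K s (d i - 1) := l_mem_ffilt hlc hl i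
  have h1 : r i + l i ∈ Ffilt K s (d i - 1) := ffilt_mono (by omega) hmem
  have h2 : r i ∈ Ffilt K s (d i - 1) := by
    have := Submodule.sub_mem _ h1 hli
    simpa using this
  exact hr0 i (tgrade_inf_ffilt (by omega) (hr i) h2)

include hr in
lemma AR_le_tgrade : ∀ k, AR K s d r k ≤ Tgrade K s k
  | 0 => bot_le
  | k + 1 => AR_succ_le
      ((mul_le_mul' le_rfl (AR_le_tgrade k)).trans (V_mul_tgrade k).le)
      ((mul_le_mul' (AR_le_tgrade k) le_rfl).trans (tgrade_mul_V k).le)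
      (span_le.2 fun x hx => by obtain ⟨i, hik, hix⟩ := hx; rw [← hix, ← hik]; exact hr i)

include hd in
lemma span_dk_le_AR : ∀ k, Submodule.span K {x | ∃ i, d i = k ∧ r i = x} ≤ AR K s d r k
  | 0 => span_le.2 fun x hx => by
      obtain ⟨i, hik, _⟩ := hx
      exact absurd hik (by have := hd i; omega)
  | k + 1 => le_AR_succ_span

include hr in
lemma AR_le_pkR : ∀ k, AR K s d r k ≤ Pk K s (Set.range r) k
  | 0 => bot_le
  | k + 1 => AR_succ_le
      ((mul_le_mul' le_rfl (AR_le_pkR k)).trans le_pk_succ_left)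
      ((mul_le_mul' (AR_le_pkR k) le_rfl).trans le_pk_succ_right)
      ((span_le.2 fun x hx => by
        obtain ⟨i, hik, hix⟩ := hx
        refine subset_span ⟨⟨i, hix⟩, ?_⟩
        rw [← hix]
        exact tgrade_le_ffilt (by omega) (hik ▸ hr i)).trans le_pk_succ_span)

include hd hr hr0 in
lemma pkR_le_biSup_AR : ∀ n, Pk K s (Set.range r) n ≤ ⨆ k ∈ {k : ℕ | k ≤ n}, AR K s d r k
  | 0 => bot_le
  | n + 1 => by
      refine pk_succ_le ?_ ?_ ?_
      · refine (mul_le_mul' le_rfl (pkR_le_biSup_AR n)).trans ?_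
        rw [mul_iSup]
        refine iSup_le fun k => ?_
        rw [mul_iSup]
        refine iSup_le fun hk => ?_
        exact le_AR_succ_left.trans (le_iSup₂_of_le (k + 1) (by exact Nat.succ_le_succ hk) le_rfl)
      · refine (mul_le_mul' (pkR_le_biSup_AR n) le_rfl).trans ?_
        rw [iSup_mul]
        refine iSup_le fun k => ?_
        rw [iSup_mul]
        refine iSup_le fun hk => ?_
        exact le_AR_succ_right.trans (le_iSup₂_of_le (k + 1) (by exact Nat.succ_le_succ hk) le_rfl)
      · refine span_le.2 ?_
        rintro x ⟨⟨i, rfl⟩, hxF⟩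
        have hdi : d i ≤ n + 1 := by
          by_contra hgt
          push_neg at hgt
          have : r i ∈ Ffilt K s (d i - 1) := ffilt_mono (by omega) hxF
          exact hr0 i (tgrade_inf_ffilt (by omega) (hr i) this)
        have hx : r i ∈ AR K s d r (d i) :=
          span_dk_le_AR hd (d i) (subset_span ⟨i, rfl, rfl⟩)
        exact (show AR K s d r (d i) ≤ ⨆ k ∈ {k : ℕ | k ≤ n + 1}, AR K s d r k from
          le_iSup₂_of_le (d i) hdi le_rfl) hx

include hd hr hr0 in
lemma idealR_eq_iSup_AR :
    idealCarrier K s (Set.range r) = ⨆ k, AR K s d r k := by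
  rw [ideal_eq_iSup_pk]
  refine le_antisymm (iSup_le fun n => (pkR_le_biSup_AR hd hr hr0 n).trans
    (iSup₂_le fun k _ => le_iSup _ k)) (iSup_le fun k => (AR_le_pkR hr k).trans (le_iSup _ k))

include hd hr hr0 in
lemma mem_AR_of_tgrade {x : T K s} {k : ℕ}
    (hx : x ∈ idealCarrier K s (Set.range r)) (hxk : x ∈ Tgrade K s k) :
    x ∈ AR K s d r k := by
  rw [idealR_eq_iSup_AR hd hr hr0] at hx
  obtain ⟨f, hf, hsum⟩ := (Submodule.mem_iSup_iff_exists_finsupp _ _).1 hx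
  have hsum' : f k + (f.erase k).sum (fun _ v => v) = x := by
    rw [← hsum]
    exact Finsupp.add_sum_erase' f k (fun _ v => v) (fun _ => rfl)
  have herase : (f.erase k).sum (fun _ v => v) ∈ ⨆ n ∈ {n : ℕ | n ≠ k}, Tgrade K s n := by
    rw [Finsupp.sum]
    refine Submodule.sum_mem _ fun n hn => ?_
    have hnk : n ≠ k := by
      have := Finsupp.support_erase (a := k) (f := f) ▸ hn
      exact Finset.ne_of_mem_erase this
    rw [Finsupp.erase_ne hnk]
    exact (show Tgrade K s n ≤ _ from le_iSup₂_of_le n hnk le_rfl)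
      (AR_le_tgrade hr n (hf n))
  have hdiff : x - f k ∈ ⨆ n ∈ {n : ℕ | n ≠ k}, Tgrade K s n := by
    rw [← hsum']; simpa using herase
  have hdiff' : x - f k ∈ Tgrade K s k :=
    Submodule.sub_mem _ hxk (AR_le_tgrade hr k (hf k))
  have : x - f k = 0 := tgrade_inf_compl hdiff' hdiff
  have hxf : x = f k := by linear_combination (norm := abel1) this
  rw [hxf]
  exact hf k

end Hyps
end Rel

lemma mul_idealCarrier_le (S : Set (T K s)) :
    V K s * idealCarrier K s S ≤ idealCarrier K s S :=
  Submodule.mul_le.2 fun v _ x hx => (TwoSidedIdeal.span S).mul_mem_left _ _ hx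

lemma idealCarrier_mul_le (S : Set (T K s)) :
    idealCarrier K s S * V K s ≤ idealCarrier K s S :=
  Submodule.mul_le.2 fun x hx v _ => (TwoSidedIdeal.span S).mul_mem_right _ _ hx

lemma pk_zero (S : Set (T K s)) : Pk K s S 0 = ⊥ := rfl

section Rel2

variable {m : ℕ} {d : Fin m → ℕ} {r l : Fin m → T K s} {lc : Fin m → ℕ → T K s}
variable (hd : ∀ i, 2 ≤ d i) (hr : ∀ i, r i ∈ Tgrade K s (d i)) (hr0 : ∀ i, r i ≠ 0)
  (hlc : ∀ i j, lc i j ∈ Tgrade K s j) (hl : ∀ i, l i = ∑ j ∈ Finset.range (d i), lc i j)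

include hd hr hr0 hlc hl in
lemma pkP_one_bot : Pk K s (PsetOf K s r l) 1 = ⊥ := by
  refine le_bot_iff.1 (pk_succ_le ?_ ?_ ?_)
  · rw [pk_zero, Submodule.mul_bot]
  · rw [pk_zero, Submodule.bot_mul]
  · refine span_le.2 ?_
    rintro x ⟨⟨i, rfl⟩, hxF⟩
    exact absurd (deg_le_of_mem_ffilt hr hr0 hlc hl hxF) (by have := hd i; omega)

include hd in
lemma AR_one_bot : AR K s d r 1 = ⊥ := by
  refine le_bot_iff.1 (AR_succ_le ?_ ?_ ?_)
  · rw [show AR K s d r 0 = ⊥ from rfl, Submodule.mul_bot]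
  · rw [show AR K s d r 0 = ⊥ from rfl, Submodule.bot_mul]
  · refine span_le.2 ?_
    rintro x ⟨i, hik, rfl⟩
    exact absurd hik (by have := hd i; omega)

include hd hr hlc hl in
lemma AR_le_pkP : ∀ k, AR K s d r (k + 1) ≤ Pk K s (PsetOf K s r l) (k + 1) + Ffilt K s k
  | 0 => by rw [AR_one_bot hd]; exact bot_le
  | k + 1 => by
      refine AR_succ_le ?_ ?_ ?_
      · refine (mul_le_mul' le_rfl (AR_le_pkP k)).trans ?_
        rw [Submodule.add_eq_sup, Submodule.add_eq_sup, Submodule.mul_sup]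
        exact sup_le (le_pk_succ_left.trans le_sup_left)
          ((V_mul_ffilt k).trans le_sup_right)
      · refine (mul_le_mul' (AR_le_pkP k) le_rfl).trans ?_
        rw [Submodule.add_eq_sup, Submodule.add_eq_sup, Submodule.sup_mul]
        exact sup_le (le_pk_succ_right.trans le_sup_left)
          ((ffilt_mul_V k).trans le_sup_right)
      · refine span_le.2 ?_
        rintro x ⟨i, hik, rfl⟩
        have hri : r i ∈ Tgrade K s (k + 2) := by rw [← hik]; exact hr i
        have hli : l i ∈ Ffilt K s (k + 1) := by
          have := l_mem_ffilt hlc hl i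
          exact ffilt_mono (by omega) this
        have h1 : r i + l i ∈ Pk K s (PsetOf K s r l) (k + 2) := by
          refine le_pk_succ_span (subset_span ⟨⟨i, rfl⟩, ?_⟩)
          exact add_mem (tgrade_le_ffilt le_rfl hri) (ffilt_mono (by omega) hli)
        have h2 : -(l i) ∈ Ffilt K s (k + 1) := neg_mem hli
        have hxeq : r i = (r i + l i) + -(l i) := by abel
        rw [SetLike.mem_coe, Submodule.add_eq_sup, hxeq]
        exact add_mem_sup h1 h2

include hd hr hr0 hlc hl in
lemma pkP_le_idealR :
    ∀ k, Pk K s (PsetOf K s r l) (k + 1) ≤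
      (idealCarrier K s (Set.range r) ⊓ Tgrade K s (k + 1)) + Ffilt K s k
  | 0 => by rw [pkP_one_bot hd hr hr0 hlc hl]; exact bot_le
  | k + 1 => by
      refine pk_succ_le ?_ ?_ ?_
      · refine (mul_le_mul' le_rfl (pkP_le_idealR k)).trans ?_
        rw [Submodule.add_eq_sup, Submodule.add_eq_sup, Submodule.mul_sup]
        refine sup_le (le_trans (le_inf ?_ ?_) le_sup_left) ((V_mul_ffilt k).trans le_sup_right)
        · exact (mul_le_mul' le_rfl inf_le_left).trans (mul_idealCarrier_le _)
        · exact (mul_le_mul' le_rfl inf_le_right).trans (V_mul_tgrade (k + 1)).le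
      · refine (mul_le_mul' (pkP_le_idealR k) le_rfl).trans ?_
        rw [Submodule.add_eq_sup, Submodule.add_eq_sup, Submodule.sup_mul]
        refine sup_le (le_trans (le_inf ?_ ?_) le_sup_left) ((ffilt_mul_V k).trans le_sup_right)
        · exact (mul_le_mul' inf_le_left le_rfl).trans (idealCarrier_mul_le _)
        · exact (mul_le_mul' inf_le_right le_rfl).trans (tgrade_mul_V (k + 1)).le
      · refine span_le.2 ?_
        rintro x ⟨⟨i, rfl⟩, hxF⟩
        have hdi : d i ≤ k + 2 := deg_le_of_mem_ffilt hr hr0 hlc hl hxF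
        have hli : l i ∈ Ffilt K s (d i - 1) := l_mem_ffilt hlc hl i
        rw [SetLike.mem_coe, Submodule.add_eq_sup]
        rcases eq_or_lt_of_le hdi with heq | hlt
        · have h1 : r i ∈ idealCarrier K s (Set.range r) ⊓ Tgrade K s (k + 2) := by
            refine ⟨mem_idealCarrier.2 (TwoSidedIdeal.subset_span ⟨i, rfl⟩), ?_⟩
            rw [← heq]; exact hr i
          exact add_mem_sup h1 (ffilt_mono (by omega) hli)
        · refine Submodule.mem_sup_right (add_mem ?_ (ffilt_mono (by omega) hli))
          exact tgrade_le_ffilt (by omega) (hr i)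

end Rel2

lemma pk_empty : ∀ k, Pk K s (∅ : Set (T K s)) k = ⊥
  | 0 => rfl
  | k + 1 => le_bot_iff.1 (pk_succ_le
      (by rw [pk_empty k, Submodule.mul_bot])
      (by rw [pk_empty k, Submodule.bot_mul])
      (by rw [Set.empty_inter, Submodule.span_empty]))

theorem pbw_iff_jacobi' {m : ℕ} (d : Fin m → ℕ) (r l : Fin m → T K s) (lc : Fin m → ℕ → T K s)
    (hd : ∀ i, 2 ≤ d i)
    (hr : ∀ i, r i ∈ Tgrade K s (d i))
    (hr0 : ∀ i, r i ≠ 0)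
    (hlc : ∀ i j, lc i j ∈ Tgrade K s j)
    (hl : ∀ i, l i = ∑ j ∈ Finset.range (d i), lc i j) :
    (∀ i : ℕ, 1 ≤ i → ∀ x ∈ Tgrade K s i,
        (∃ y ∈ Ffilt K s (i - 1), x + y ∈ TwoSidedIdeal.span (PsetOf K s r l)) →
        x ∈ TwoSidedIdeal.span (Set.range r))
    ↔
    (Pk K s (PsetOf K s r l) 1 = ⊥ ∧
      ∀ k : ℕ, 1 ≤ k →
        Pk K s (PsetOf K s r l) (k + 1) ⊓ Ffilt K s k ≤ Pk K s (PsetOf K s r l) k) := by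
  constructor
  · intro hPBW
    refine ⟨pkP_one_bot hd hr hr0 hlc hl, ?_⟩
    have E : ∀ k, idealCarrier K s (PsetOf K s r l) ⊓ Ffilt K s k ≤
        Pk K s (PsetOf K s r l) k := by
      intro k
      induction k with
      | zero =>
          rintro u ⟨hu, huF⟩
          rw [ffilt_zero, Tgrade, pow_zero] at huF
          obtain ⟨c, rfl⟩ := Submodule.mem_one.1 huF
          by_cases hc : c = 0
          · rw [hc, map_zero]; exact Submodule.zero_mem _
          exfalso
          have hone : (1 : T K s) ∈ idealCarrier K s (PsetOf K s r l) := by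
            have h2 := Submodule.smul_mem (idealCarrier K s (PsetOf K s r l)) c⁻¹ hu
            rwa [Algebra.smul_def, ← map_mul, inv_mul_cancel₀ hc, map_one] at h2
          rcases Nat.eq_zero_or_pos m with hm | hm
          · have hPe : PsetOf K s r l = ∅ := by
              have : IsEmpty (Fin m) := by rw [hm]; exact Fin.isEmpty
              exact Set.range_eq_empty _
            rw [hPe, ideal_eq_iSup_pk] at hone
            obtain ⟨n, hn⟩ := mem_iSup_pk.1 hone
            rw [pk_empty n, Submodule.mem_bot] at hn
            exact one_ne_zero hn
          · have i0 : Fin m := ⟨0, hm⟩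
            have hsne : Nonempty (Fin s) := by
              by_contra hempty
              have hie : IsEmpty (Fin s) := not_nonempty_iff.1 hempty
              have hV : V K s = ⊥ := by
                rw [V, Set.range_eq_empty, Submodule.span_empty]
              have hT : Tgrade K s (d i0) = ⊥ := by
                rw [Tgrade, hV, ← Submodule.zero_eq_bot, zero_pow (by have := hd i0; omega),
                  Submodule.zero_eq_bot]
              exact hr0 i0 ((Submodule.mem_bot K).1 (hT ▸ hr i0))
            obtain ⟨j⟩ := hsne
            have hx1 : FreeAlgebra.ι K j ∈ Tgrade K s 1 := by
              rw [Tgrade, pow_one]; exact subset_span ⟨j, rfl⟩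
            have hxI : FreeAlgebra.ι K j + 0 ∈ TwoSidedIdeal.span (PsetOf K s r l) := by
              rw [add_zero]
              have := (TwoSidedIdeal.span (PsetOf K s r l)).mul_mem_left
                (FreeAlgebra.ι K j) 1 (mem_idealCarrier.1 hone)
              rwa [mul_one] at this
            have hxJ := hPBW 1 le_rfl _ hx1 ⟨0, Submodule.zero_mem _, hxI⟩
            have hAR := mem_AR_of_tgrade hd hr hr0 (mem_idealCarrier.2 hxJ) hx1
            rw [AR_one_bot hd, Submodule.mem_bot] at hAR
            have hbne := (FreeAlgebra.basisFreeMonoid K (Fin s)).ne_zero (FreeMonoid.of j)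
            rw [basis_apply, FreeMonoid.lift_eval_of] at hbne
            exact hbne hAR
      | succ k ih =>
          rintro u ⟨huI, huF⟩
          rw [ffilt_succ] at huF
          obtain ⟨y, hy, x, hx, hsum⟩ := Submodule.mem_sup.1 huF
          have hxyu : x + y = u := by rw [← hsum]; exact add_comm x y
          have hxI : x + y ∈ TwoSidedIdeal.span (PsetOf K s r l) := by
            rw [hxyu]; exact mem_idealCarrier.1 huI
          have hxJ := hPBW (k + 1) (Nat.succ_le_succ (Nat.zero_le k)) x hx ⟨y, hy, hxI⟩
          have hxAR : x ∈ AR K s d r (k + 1) :=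
            mem_AR_of_tgrade hd hr hr0 (mem_idealCarrier.2 hxJ) hx
          have hsplit := AR_le_pkP hd hr hlc hl k hxAR
          rw [Submodule.add_eq_sup] at hsplit
          obtain ⟨q, hq, f, hf, hqf⟩ := Submodule.mem_sup.1 hsplit
          have huq : u - q ∈ idealCarrier K s (PsetOf K s r l) ⊓ Ffilt K s k := by
            constructor
            · exact Submodule.sub_mem _ huI (pk_le_ideal (PsetOf K s r l) (k + 1) hq)
            · have heq : u - q = f + y := by rw [← hxyu, ← hqf]; abel
              rw [heq]; exact add_mem hf hy
          have hu2 : u = q + (u - q) := by abel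
          rw [hu2]
          exact add_mem hq (pk_mono_succ _ k (ih huq))
    intro k _
    exact fun x hx => E k ⟨pk_le_ideal (PsetOf K s r l) (k + 1) hx.1, hx.2⟩
  · rintro ⟨h1, hJac⟩
    have hJac' : ∀ k j, Pk K s (PsetOf K s r l) (k + 1 + j) ⊓ Ffilt K s k ≤
        Pk K s (PsetOf K s r l) k := by
      intro k j
      induction j with
      | zero =>
          rcases Nat.eq_zero_or_pos k with rfl | hk
          · rw [show (0 : ℕ) + 1 + 0 = 1 from rfl, pkP_one_bot hd hr hr0 hlc hl]
            exact inf_le_left.trans bot_le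
          · exact hJac k hk
      | succ j ih =>
          intro u hu
          have hu1 : u ∈ Pk K s (PsetOf K s r l) ((k + j + 1) + 1) := by
            have h : k + 1 + (j + 1) = (k + j + 1) + 1 := by omega
            rw [← h]; exact hu.1
          have hu2 : u ∈ Ffilt K s (k + j + 1) := ffilt_mono (by omega) hu.2
          have h3 := hJac (k + j + 1) (by omega) ⟨hu1, hu2⟩
          have h4 : u ∈ Pk K s (PsetOf K s r l) (k + 1 + j) := by
            have h : k + 1 + j = k + j + 1 := by omega
            rw [h]; exact h3
          exact ih ⟨h4, hu.2⟩
    have E' : ∀ k, idealCarrier K s (PsetOf K s r l) ⊓ Ffilt K s k ≤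
        Pk K s (PsetOf K s r l) k := by
      rintro k u ⟨huI, huF⟩
      rw [ideal_eq_iSup_pk] at huI
      obtain ⟨n, hn⟩ := mem_iSup_pk.1 huI
      rcases le_or_gt n k with h | h
      · exact pk_mono _ h hn
      · refine hJac' k (n - k - 1) ⟨?_, huF⟩
        have heq : k + 1 + (n - k - 1) = n := by omega
        rw [heq]; exact hn
    intro i hi x hx hex
    obtain ⟨y, hy, hxyI⟩ := hex
    obtain ⟨k, rfl⟩ : ∃ k, i = k + 1 := ⟨i - 1, by omega⟩
    have hxy : x + y ∈ idealCarrier K s (PsetOf K s r l) ⊓ Ffilt K s (k + 1) := by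
      refine ⟨mem_idealCarrier.2 hxyI, add_mem (tgrade_le_ffilt le_rfl hx) ?_⟩
      exact ffilt_mono (by omega) hy
    have hQ := E' (k + 1) hxy
    have hsplit := pkP_le_idealR hd hr hr0 hlc hl k hQ
    rw [Submodule.add_eq_sup] at hsplit
    obtain ⟨a, ha, f, hf, haf⟩ := Submodule.mem_sup.1 hsplit
    have hxa : x - a ∈ Tgrade K s (k + 1) := Submodule.sub_mem _ hx ha.2
    have hxa' : x - a ∈ Ffilt K s k := by
      have h5 : x - a = f - y := sub_eq_sub_iff_add_eq_add.2 (by rw [← haf]; exact add_comm a f)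
      rw [h5]
      exact Submodule.sub_mem _ hf hy
    have h0 : x - a = 0 := tgrade_inf_ffilt (Nat.lt_succ_self k) hxa hxa'
    have hxa0 : x = a := sub_eq_zero.1 h0
    rw [hxa0]
    exact mem_idealCarrier.1 ha.1

end AuxProofs

theorem pbw_iff_jacobi (K : Type*) [Field K] (s : ℕ)
    {m : ℕ} (d : Fin m → ℕ) (r l : Fin m → T K s) (lc : Fin m → ℕ → T K s)
    -- each relation `r_i` of `A` is homogeneous of degree `d_i ≥ 2` and nonzero
    (hd : ∀ i, 2 ≤ d i)
    (hr : ∀ i, r i ∈ Tgrade K s (d i))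
    (hr0 : ∀ i, r i ≠ 0)
    -- `l_i = Σ_{j < d_i} l_{i,j}` with `l_{i,j}` homogeneous of degree `j`, so `deg l_i < d_i`
    (hlc : ∀ i j, lc i j ∈ Tgrade K s j)
    (hl : ∀ i, l i = ∑ j ∈ Finset.range (d i), lc i j) :
    -- `U` is a PBW-deformation of `A`
    (∀ i : ℕ, 1 ≤ i → ∀ x ∈ Tgrade K s i,
        (∃ y ∈ Ffilt K s (i - 1), x + y ∈ TwoSidedIdeal.span (PsetOf K s r l)) →
        x ∈ TwoSidedIdeal.span (Set.range r))
    ↔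
    -- `P_1 = 0` and the Jacobi condition `P_{k+1} ∩ F^kT ⊆ P_k` holds for every `k ≥ 1`
    (Pk K s (PsetOf K s r l) 1 = ⊥ ∧
      ∀ k : ℕ, 1 ≤ k →
        Pk K s (PsetOf K s r l) (k + 1) ⊓ Ffilt K s k ≤ Pk K s (PsetOf K s r l) k) := by
  exact pbw_iff_jacobi' d r l lc hd hr hr0 hlc hl

end PBWPaper
end
end
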